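/- Empirical quantile inflation guarantees finite-sample validity: for i.i.d. continuous real random variables S_1,...,S_n, S_{n+1}, letting q̂ be the ⌈(1+1/n)(1−α)·n⌉-th order statistic of S_1,...,S_n (assuming (1+1/n)(1−α) ≤ 1), it holds that 1−α ≤ P(S_{n+1} ≤ q̂) ≤ 1−α + 1/(n+1). -/

import Mathlib

open MeasureTheory ProbabilityTheory Finset
open scoped ENNReal NNReal

/-- The rank function of an injective tuple is injective. -/
lemma rank_injective {m : ℕ} (x : Fin m → ℝ) (hx : Function.Injective x) :
    Function.Injective (fun a : Fin m => (univ.filter fun i => x i ≤ x a).card) := by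
  have key : ∀ a b : Fin m, x a ≤ x b →
      (univ.filter fun i => x i ≤ x a).card = (univ.filter fun i => x i ≤ x b).card → a = b := by
    intro a b hab h
    have hsub : (univ.filter fun i => x i ≤ x a) ⊆ (univ.filter fun i => x i ≤ x b) := by
      intro i hi
      simp only [Finset.mem_filter, Finset.mem_univ, true_and] at hi ⊢
      exact le_trans hi hab
    have heq := Finset.eq_of_subset_of_card_le hsub (le_of_eq h.symm)
    have hb : b ∈ univ.filter fun i => x i ≤ x b := by simp
    rw [← heq] at hb
    have : x b ≤ x a := by simpa using hb
    exact hx (le_antisymm hab this)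
  intro a b h
  rcases le_total (x a) (x b) with hab | hab
  · exact key a b hab h
  · exact (key b a hab h.symm).symm

/-- The ranks of an injective tuple are exactly `{1, ..., m}`. -/
lemma rank_image {m : ℕ} (x : Fin m → ℝ) (hx : Function.Injective x) :
    (univ.image fun a : Fin m => (univ.filter fun i => x i ≤ x a).card) = Finset.Icc 1 m := by
  set r : Fin m → ℕ := fun a => (univ.filter fun i => x i ≤ x a).card with hr
  have hsub : (univ.image r) ⊆ Finset.Icc 1 m := by
    intro v hv
    simp only [Finset.mem_image] at hv
    obtain ⟨a, -, rfl⟩ := hv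
    rw [Finset.mem_Icc]
    constructor
    · have : a ∈ univ.filter fun i => x i ≤ x a := by simp
      exact Finset.card_pos.mpr ⟨a, this⟩
    · simpa using Finset.card_filter_le univ (fun i => x i ≤ x a)
  have hcard : (Finset.Icc 1 m).card ≤ (univ.image r).card := by
    rw [Finset.card_image_of_injective _ (rank_injective x hx), Nat.card_Icc]
    simp
  exact (Finset.eq_of_subset_of_card_le hsub hcard)

/-- Counting: exactly `k` coordinates have rank at most `k`. -/
lemma rank_count {m : ℕ} (x : Fin m → ℝ) (hx : Function.Injective x) (k : ℕ) (hk : k ≤ m) :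
    (univ.filter fun a : Fin m => (univ.filter fun i => x i ≤ x a).card ≤ k).card = k := by
  set r : Fin m → ℕ := fun a => (univ.filter fun i => x i ≤ x a).card with hr
  have h1 : (univ.filter fun a => r a ≤ k).card = ((univ.image r).filter fun v => v ≤ k).card := by
    rw [Finset.filter_image, Finset.card_image_of_injective _ (rank_injective x hx)]
  rw [h1, rank_image x hx]
  have : ((Finset.Icc 1 m).filter fun v => v ≤ k) = Finset.Icc 1 k := by
    ext v
    simp only [Finset.mem_filter, Finset.mem_Icc]
    omega
  rw [this, Nat.card_Icc]
  omega

/-- Pointwise: for injective scores, `S last ≤ q̂` iff the rank of `S last` among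
all `n+1` scores is at most `k`. -/
lemma pointwise_rank {n : ℕ} (hn : 0 < n) (x : Fin (n + 1) → ℝ) (hx : Function.Injective x)
    (k : ℕ) (hk1 : 1 ≤ k) (hkn : k ≤ n) :
    (x (Fin.last n) ≤ sInf {t : ℝ | k ≤ (univ.filter fun i : Fin n => x i.castSucc ≤ t).card})
      ↔ (univ.filter fun i : Fin (n + 1) => x i ≤ x (Fin.last n)).card ≤ k := by
  set y : Fin n → ℝ := fun i => x i.castSucc with hy
  have hyinj : Function.Injective y :=
    fun a b h => Fin.castSucc_injective n (hx h)
  -- find the coordinate of rank k among the first n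
  have hkmem : k ∈ (univ.image fun a : Fin n => (univ.filter fun i => y i ≤ y a).card) := by
    rw [rank_image y hyinj, Finset.mem_Icc]; exact ⟨hk1, hkn⟩
  obtain ⟨i0, -, hi0⟩ := Finset.mem_image.mp hkmem
  set q : ℝ := y i0 with hq
  set c : ℝ → ℕ := fun t => (univ.filter fun i : Fin n => y i ≤ t).card with hc
  -- Claim A : k ≤ c t ↔ q ≤ t
  have claimA : ∀ t : ℝ, k ≤ c t ↔ q ≤ t := by
    intro t
    constructor
    · intro h
      by_contra hlt
      push_neg at hlt
      have hsub : (univ.filter fun i => y i ≤ t) ⊆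
          ((univ.filter fun i => y i ≤ q).erase i0) := by
        intro i hi
        simp only [Finset.mem_filter, Finset.mem_univ, true_and] at hi
        have hiq : y i < q := lt_of_le_of_lt hi hlt
        rw [Finset.mem_erase]
        refine ⟨fun hii => ?_, by simpa using le_of_lt hiq⟩
        subst hii
        exact lt_irrefl _ hiq
      have hle := Finset.card_le_card hsub
      have hmem : i0 ∈ (univ.filter fun i => y i ≤ q) := by simp [hq]
      rw [Finset.card_erase_of_mem hmem, hi0] at hle
      have hce : c t = (univ.filter fun i => y i ≤ t).card := rfl
      omega
    · intro h
      have hsub : (univ.filter fun i => y i ≤ q) ⊆ (univ.filter fun i => y i ≤ t) := by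
        intro i hi
        simp only [Finset.mem_filter, Finset.mem_univ, true_and] at hi ⊢
        exact le_trans hi h
      calc k = (univ.filter fun i => y i ≤ q).card := hi0.symm
        _ ≤ c t := Finset.card_le_card hsub
  have hQ : {t : ℝ | k ≤ c t} = Set.Ici q := by
    ext t; exact claimA t
  have hsinf : sInf {t : ℝ | k ≤ (univ.filter fun i : Fin n => x i.castSucc ≤ t).card} = q := by
    have : {t : ℝ | k ≤ (univ.filter fun i : Fin n => x i.castSucc ≤ t).card}
        = Set.Ici q := hQ
    rw [this, csInf_Ici]
  -- split the (n+1)-count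
  have hsplit : (univ.filter fun i : Fin (n + 1) => x i ≤ x (Fin.last n)).card
      = c (x (Fin.last n)) + 1 := by
    rw [hc]
    simp only [Finset.card_filter]
    rw [Fin.sum_univ_castSucc]
    simp [hy]
  have hne : x (Fin.last n) ≠ q := by
    intro h
    have h2 : Fin.last n = i0.castSucc := hx h
    exact absurd h2.symm (Fin.castSucc_lt_last i0).ne
  rw [hsinf, hsplit]
  constructor
  · intro h
    have hlt : x (Fin.last n) < q := lt_of_le_of_ne h hne
    have : ¬ (k ≤ c (x (Fin.last n))) := by
      rw [claimA]
      exact not_le.mpr hlt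
    omega
  · intro h
    have : ¬ (k ≤ c (x (Fin.last n))) := by omega
    rw [claimA] at this
    exact le_of_lt (not_le.mp this)
open scoped ENNReal NNReal

/-- Joint law of an i.i.d. finite family is the product measure. -/
lemma joint_law {Ω : Type*} [MeasureSpace Ω] [IsProbabilityMeasure (volume : Measure Ω)]
    {m : ℕ} (S : Fin m → Ω → ℝ) (hSmeas : ∀ i, Measurable (S i))
    (hindep : iIndepFun S volume)
    (hident : ∀ i j, IdentDistrib (S i) (S j)) (i0 : Fin m) :
    Measure.map (fun ω i => S i ω) volume
      = Measure.pi (fun _ : Fin m => Measure.map (S i0) volume) := by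
  have hT : Measurable (fun ω i => S i ω) := measurable_pi_lambda _ hSmeas
  refine (Measure.pi_eq fun s hs => ?_).symm
  rw [Measure.map_apply hT (MeasurableSet.univ_pi hs)]
  have hpre : (fun ω i => S i ω) ⁻¹' (Set.pi Set.univ s) = ⋂ i ∈ univ, S i ⁻¹' s i := by
    ext ω; simp [Set.mem_pi]
  rw [hpre, hindep.measure_inter_preimage_eq_mul univ (fun i _ => hs i)]
  refine Finset.prod_congr rfl fun i _ => ?_
  rw [(hident i0 i).map_eq, Measure.map_apply (hSmeas i) (hs i)]

/-- Permutation invariance of an i.i.d. product measure. -/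
lemma pi_perm {ι : Type*} [Fintype ι] (μ : Measure ℝ) [IsProbabilityMeasure μ]
    (σ : ι ≃ ι) {B : Set (ι → ℝ)} (hB : MeasurableSet B) :
    Measure.pi (fun _ : ι => μ) ((fun x : ι → ℝ => x ∘ σ) ⁻¹' B)
      = Measure.pi (fun _ : ι => μ) B := by
  have hmp := measurePreserving_piCongrLeft (fun _ : ι => μ) σ.symm
  have hfun : ⇑(MeasurableEquiv.piCongrLeft (fun _ : ι => ℝ) σ.symm)
      = fun x : ι → ℝ => x ∘ σ := by
    funext x
    funext a
    have h1 := MeasurableEquiv.piCongrLeft_apply_apply (β := fun _ : ι => ℝ) σ.symm x (σ a)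
    simpa using h1
  rw [hfun] at hmp
  exact hmp.measure_preimage hB.nullMeasurableSet

/-- Two independent random variables with an atomless second law are a.s. distinct. -/
lemma indep_ae_ne {Ω : Type*} [MeasureSpace Ω] [IsProbabilityMeasure (volume : Measure Ω)]
    {f g : Ω → ℝ} (hf : Measurable f) (hg : Measurable g)
    (hindep : IndepFun f g volume) (hg0 : ∀ t : ℝ, Measure.map g volume {t} = 0) :
    volume {ω | f ω = g ω} = 0 := by
  have hmap := (indepFun_iff_map_prod_eq_prod_map_map hf.aemeasurable hg.aemeasurable).mp hindep
  have hD : MeasurableSet {p : ℝ × ℝ | p.1 = p.2} :=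
    measurableSet_eq_fun measurable_fst measurable_snd
  have hpre : {ω | f ω = g ω} = (fun ω => (f ω, g ω)) ⁻¹' {p : ℝ × ℝ | p.1 = p.2} := rfl
  haveI : IsProbabilityMeasure (Measure.map g volume) :=
    Measure.isProbabilityMeasure_map hg.aemeasurable
  rw [hpre, ← Measure.map_apply (hf.prodMk hg) hD, hmap, Measure.prod_apply hD]
  have hzero : ∀ a : ℝ, (Measure.map g volume) (Prod.mk a ⁻¹' {p : ℝ × ℝ | p.1 = p.2}) = 0 := by
    intro a
    have : (Prod.mk a ⁻¹' {p : ℝ × ℝ | p.1 = p.2}) = {a} := by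
      ext b; simp [eq_comm]
    rw [this]
    exact hg0 a
  simp [hzero, hg0]

/-- Under an i.i.d. product measure, the probability that the last coordinate has rank
at most `k` is exactly `k/(n+1)`. -/
lemma pi_rank_prob {n k : ℕ} (μ : Measure ℝ) [IsProbabilityMeasure μ]
    (hk : k ≤ n + 1)
    (hN : Measure.pi (fun _ : Fin (n + 1) => μ)
      {x : Fin (n + 1) → ℝ | ¬ Function.Injective x} = 0) :
    Measure.pi (fun _ : Fin (n + 1) => μ)
        {x : Fin (n + 1) → ℝ | (univ.filter fun i => x i ≤ x (Fin.last n)).card ≤ k}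
      = (k : ℝ≥0∞) / ((n : ℝ≥0∞) + 1) := by
  set π : Measure (Fin (n + 1) → ℝ) := Measure.pi (fun _ => μ) with hπ
  set E : Fin (n + 1) → Set (Fin (n + 1) → ℝ) :=
    fun m => {x | (univ.filter fun i => x i ≤ x m).card ≤ k} with hE
  have hcmeas : ∀ m : Fin (n + 1),
      Measurable fun x : Fin (n + 1) → ℝ => (univ.filter fun i => x i ≤ x m).card := by
    intro m
    have : (fun x : Fin (n + 1) → ℝ => (univ.filter fun i => x i ≤ x m).card)
        = fun x => ∑ i : Fin (n + 1), if x i ≤ x m then 1 else 0 := by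
      funext x; rw [Finset.card_filter]
    rw [this]
    refine Finset.measurable_sum _ fun i _ => Measurable.ite ?_ measurable_const
      measurable_const
    exact measurableSet_le (measurable_pi_apply i) (measurable_pi_apply m)
  have hEmeas : ∀ m, MeasurableSet (E m) := by
    intro m
    exact hcmeas m (measurableSet_Iic : MeasurableSet (Set.Iic k))
  -- permutation invariance
  have hEpre : ∀ (σ : Equiv.Perm (Fin (n + 1))) (m : Fin (n + 1)),
      (fun x : Fin (n + 1) → ℝ => x ∘ σ) ⁻¹' (E m) = E (σ m) := by
    intro σ m
    ext x
    simp only [Set.mem_preimage, hE, Set.mem_setOf_eq, Function.comp]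
    have : (univ.filter fun i => x (σ i) ≤ x (σ m)).card
        = (univ.filter fun j => x j ≤ x (σ m)).card := by
      rw [Finset.card_filter, Finset.card_filter]
      exact Equiv.sum_comp σ (fun j => if x j ≤ x (σ m) then 1 else 0)
    rw [this]
  have hperm : ∀ m, π (E m) = π (E (Fin.last n)) := by
    intro m
    have h1 := pi_perm μ (Equiv.swap m (Fin.last n)) (hEmeas (Fin.last n))
    have h2 := pi_perm μ (Equiv.swap m (Fin.last n)) (hEmeas m)
    rw [hEpre (Equiv.swap m (Fin.last n)) (Fin.last n),
      Equiv.swap_apply_right] at h1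
    rw [hEpre (Equiv.swap m (Fin.last n)) m, Equiv.swap_apply_left] at h2
    rw [← h1]
  -- sum of indicators
  haveI : IsProbabilityMeasure π := by rw [hπ]; infer_instance
  have hptwise : ∀ x : Fin (n + 1) → ℝ, Function.Injective x →
      ∑ m : Fin (n + 1), (E m).indicator (fun _ => (1 : ℝ≥0∞)) x = (k : ℝ≥0∞) := by
    intro x hx
    have h1 : ∀ m, (E m).indicator (fun _ => (1 : ℝ≥0∞)) x
        = ((if (univ.filter fun i => x i ≤ x m).card ≤ k then 1 else 0 : ℕ) : ℝ≥0∞) := by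
      intro m
      rw [Set.indicator_apply]
      split_ifs with h h' h'
      · simp
      · exact absurd h h'
      · exact absurd h' h
      · simp
    simp only [h1]
    rw [← Nat.cast_sum]
    norm_cast
    rw [← Finset.card_filter]
    exact rank_count x hx k hk
  have hae : ∀ᵐ x ∂π, ∑ m : Fin (n + 1), (E m).indicator (fun _ => (1 : ℝ≥0∞)) x
      = (k : ℝ≥0∞) := by
    have hmem : {x : Fin (n + 1) → ℝ | Function.Injective x} ∈ ae π := by
      rw [mem_ae_iff, Set.compl_setOf]
      exact hN
    exact Filter.eventually_of_mem hmem fun x hx => hptwise x hx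
  have hsum : ∑ m : Fin (n + 1), π (E m) = (k : ℝ≥0∞) := by
    have h2 : ∀ m, π (E m) = ∫⁻ x, (E m).indicator (fun _ => (1 : ℝ≥0∞)) x ∂π := by
      intro m
      rw [lintegral_indicator_const (hEmeas m), one_mul]
    simp only [h2]
    rw [← lintegral_finset_sum _ fun m _ =>
      (measurable_const.indicator (hEmeas m))]
    rw [lintegral_congr_ae hae, lintegral_const]
    simp
  have hconst : ((n : ℝ≥0∞) + 1) * π (E (Fin.last n)) = (k : ℝ≥0∞) := by
    rw [← hsum, Finset.sum_congr rfl fun m _ => hperm m, Finset.sum_const,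
      Finset.card_univ, Fintype.card_fin, nsmul_eq_mul]
    push_cast
    ring
  exact (ENNReal.eq_div_iff (by exact_mod_cast Nat.succ_ne_zero n) (by simp : ((n : ℝ≥0∞) + 1) ≠ ⊤)).mpr hconst

/-- Measurability of rank events. -/
lemma rank_set_measurable {n k : ℕ} (m : Fin (n + 1)) :
    MeasurableSet {x : Fin (n + 1) → ℝ | (univ.filter fun i => x i ≤ x m).card ≤ k} := by
  have hc : Measurable fun x : Fin (n + 1) → ℝ => (univ.filter fun i => x i ≤ x m).card := by
    have : (fun x : Fin (n + 1) → ℝ => (univ.filter fun i => x i ≤ x m).card)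
        = fun x => ∑ i : Fin (n + 1), if x i ≤ x m then 1 else 0 := by
      funext x; rw [Finset.card_filter]
    rw [this]
    refine Finset.measurable_sum _ fun i _ => Measurable.ite ?_ measurable_const
      measurable_const
    exact measurableSet_le (measurable_pi_apply i) (measurable_pi_apply m)
  exact hc (measurableSet_Iic : MeasurableSet (Set.Iic k))

/-- Non-injectivity is a measurable set. -/
lemma noninj_measurable {n : ℕ} :
    MeasurableSet {x : Fin (n + 1) → ℝ | ¬ Function.Injective x} := by
  have : {x : Fin (n + 1) → ℝ | ¬ Function.Injective x}
      = ⋃ i, ⋃ j, {x : Fin (n + 1) → ℝ | i ≠ j ∧ x i = x j} := by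
    ext x
    simp only [Set.mem_setOf_eq, Set.mem_iUnion, Function.not_injective_iff]
    constructor
    · rintro ⟨i, j, hij, hne⟩; exact ⟨i, j, hne, hij⟩
    · rintro ⟨i, j, hne, hij⟩; exact ⟨i, j, hij, hne⟩
  rw [this]
  refine MeasurableSet.iUnion fun i => MeasurableSet.iUnion fun j => ?_
  have : {x : Fin (n + 1) → ℝ | i ≠ j ∧ x i = x j}
      = {x : Fin (n + 1) → ℝ | i ≠ j} ∩ {x | x i = x j} := rfl
  rw [this]
  exact (MeasurableSet.const _).inter
    (measurableSet_eq_fun (measurable_pi_apply i) (measurable_pi_apply j))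

/-- Two-sided split conformal coverage: for i.i.d. continuous (atomless) scores
`S 1, ..., S (n+1)`, with `q̂` the `⌈(1+1/n)(1−α)n⌉`-th order statistic of the first
`n` scores (assuming `(1+1/n)(1−α) ≤ 1`), the coverage satisfies
`1 − α ≤ P(S (n+1) ≤ q̂) ≤ 1 − α + 1/(n+1)`. -/
theorem split_conformal_two_sided
    {Ω : Type*} [MeasureSpace Ω] [IsProbabilityMeasure (volume : Measure Ω)]
    (n : ℕ) (hn : 0 < n) (α : ℝ) (hα : α ∈ Set.Ioo (0 : ℝ) 1)
    (S : Fin (n + 1) → Ω → ℝ)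
    (hSmeas : ∀ i, Measurable (S i))
    (hindep : iIndepFun S volume)
    (hident : ∀ i j, IdentDistrib (S i) (S j))
    (hcont : ∀ (i : Fin (n + 1)) (t : ℝ), Measure.map (S i) volume {t} = 0)
    (hlevel : (1 + 1 / (n : ℝ)) * (1 - α) ≤ 1) :
    ENNReal.ofReal (1 - α) ≤
        volume {ω : Ω | S (Fin.last n) ω ≤
          sInf {t : ℝ | ⌈(1 + 1 / (n : ℝ)) * (1 - α) * n⌉₊ ≤
            (univ.filter fun i : Fin n => S i.castSucc ω ≤ t).card}}
      ∧ volume {ω : Ω | S (Fin.last n) ω ≤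
          sInf {t : ℝ | ⌈(1 + 1 / (n : ℝ)) * (1 - α) * n⌉₊ ≤
            (univ.filter fun i : Fin n => S i.castSucc ω ≤ t).card}}
        ≤ ENNReal.ofReal (1 - α + 1 / (n + 1)) := by
  obtain ⟨hα0, hα1⟩ := hα
  have hn' : (0 : ℝ) < n := by exact_mod_cast hn
  set k : ℕ := ⌈(1 + 1 / (n : ℝ)) * (1 - α) * n⌉₊ with hkdef
  have harith : (1 + 1 / (n : ℝ)) * (1 - α) * n = ((n : ℝ) + 1) * (1 - α) := by
    field_simp
  have hk1 : 1 ≤ k := by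
    rw [hkdef]
    refine Nat.one_le_iff_ne_zero.mpr (Nat.pos_iff_ne_zero.mp (Nat.ceil_pos.mpr ?_))
    rw [harith]
    have : 0 < 1 - α := by linarith
    positivity
  have hkn : k ≤ n := by
    rw [hkdef]
    refine Nat.ceil_le.mpr ?_
    have h2 := mul_le_mul_of_nonneg_right hlevel hn'.le
    simpa using h2
  -- joint law
  set μ : Measure ℝ := Measure.map (S (Fin.last n)) volume with hμ
  haveI : IsProbabilityMeasure μ :=
    Measure.isProbabilityMeasure_map (hSmeas (Fin.last n)).aemeasurable
  set T : Ω → (Fin (n + 1) → ℝ) := fun ω i => S i ω with hT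
  have hTmeas : Measurable T := measurable_pi_lambda _ hSmeas
  have hlaw : Measure.map T volume = Measure.pi (fun _ : Fin (n + 1) => μ) :=
    joint_law S hSmeas hindep hident (Fin.last n)
  -- a.s. distinctness in Ω
  have hNΩ : volume {ω : Ω | ¬ Function.Injective fun i => S i ω} = 0 := by
    refine measure_mono_null (?_ :
      _ ⊆ ⋃ i, ⋃ j, {ω : Ω | i ≠ j ∧ S i ω = S j ω}) ?_
    · intro ω hω
      simp only [Set.mem_setOf_eq, Function.not_injective_iff] at hω
      obtain ⟨i, j, hij, hne⟩ := hω
      simp only [Set.mem_iUnion, Set.mem_setOf_eq]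
      exact ⟨i, j, hne, hij⟩
    · refine measure_iUnion_null fun i => measure_iUnion_null fun j => ?_
      by_cases hij : i = j
      · subst hij; simp
      · refine measure_mono_null (fun ω hω => hω.2) ?_
        exact indep_ae_ne (hSmeas i) (hSmeas j) (hindep.indepFun hij) (hcont j)
  -- a.s. distinctness in the product space
  have hNπ : Measure.pi (fun _ : Fin (n + 1) => μ)
      {x : Fin (n + 1) → ℝ | ¬ Function.Injective x} = 0 := by
    rw [← hlaw, Measure.map_apply hTmeas noninj_measurable]
    exact hNΩ
  have hprob := pi_rank_prob (n := n) (k := k) μ (hkn.trans (Nat.le_succ n)) hNπ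
  -- identify the event
  have haeΩ : {ω : Ω | S (Fin.last n) ω ≤
        sInf {t : ℝ | k ≤ (univ.filter fun i : Fin n => S i.castSucc ω ≤ t).card}}
      =ᵐ[volume] T ⁻¹'
        {x : Fin (n + 1) → ℝ | (univ.filter fun i => x i ≤ x (Fin.last n)).card ≤ k} := by
    rw [Filter.eventuallyEq_set]
    have hmem : {ω : Ω | Function.Injective fun i => S i ω} ∈ ae volume := by
      rw [mem_ae_iff, Set.compl_setOf]
      exact hNΩ
    refine Filter.eventually_of_mem hmem fun ω hω => ?_
    simp only [Set.mem_setOf_eq, Set.mem_preimage]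
    exact pointwise_rank hn (fun i => S i ω) hω k hk1 hkn
  have hvol : volume {ω : Ω | S (Fin.last n) ω ≤
        sInf {t : ℝ | k ≤ (univ.filter fun i : Fin n => S i.castSucc ω ≤ t).card}}
      = (k : ℝ≥0∞) / ((n : ℝ≥0∞) + 1) := by
    rw [measure_congr haeΩ, ← hprob, ← hlaw, Measure.map_apply hTmeas (rank_set_measurable (Fin.last n))]
  -- real-valued bounds on k/(n+1)
  have hlow : (1 : ℝ) - α ≤ (k : ℝ) / ((n : ℝ) + 1) := by
    rw [le_div_iff₀ (by positivity)]
    calc (1 - α) * ((n : ℝ) + 1) = ((n : ℝ) + 1) * (1 - α) := by ring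
      _ ≤ k := by rw [← harith]; exact Nat.le_ceil _
  have hhigh : (k : ℝ) / ((n : ℝ) + 1) ≤ 1 - α + 1 / ((n : ℝ) + 1) := by
    rw [div_le_iff₀ (by positivity)]
    have hpos : (0 : ℝ) ≤ (1 + 1 / (n : ℝ)) * (1 - α) * n := by
      have h1 : (0 : ℝ) < 1 - α := by linarith
      rw [harith]
      positivity
    have hceil : (k : ℝ) ≤ ((n : ℝ) + 1) * (1 - α) + 1 := by
      rw [← harith]
      exact le_of_lt (Nat.ceil_lt_add_one hpos)
    have hinv : (1 / ((n : ℝ) + 1)) * ((n : ℝ) + 1) = 1 := by field_simp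
    nlinarith [hceil, hinv]
  have hcast : (k : ℝ≥0∞) / ((n : ℝ≥0∞) + 1)
      = ENNReal.ofReal ((k : ℝ) / ((n : ℝ) + 1)) := by
    rw [ENNReal.ofReal_div_of_pos (by positivity)]
    congr 1
    · exact (ENNReal.ofReal_natCast k).symm
    · rw [show ((n : ℝ) + 1) = ((n + 1 : ℕ) : ℝ) by push_cast; ring,
        ENNReal.ofReal_natCast]
      push_cast
      ring
  rw [hvol, hcast]
  exact ⟨ENNReal.ofReal_le_ofReal hlow, ENNReal.ofReal_le_ofReal hhigh⟩
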